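/- The map σᴳ(g) = P (gᵀ)⁻¹ P is a group automorphism of SL(3,ℂ) of order exactly 6 (σᴳ is multiplicative, bijective, (σᴳ)⁶ = id and (σᴳ)ʲ ≠ id for 1 ≤ j ≤ 5), it maps SU(3) onto SU(3), and it commutes with the involution τᴳ(g) = (conj(g)ᵀ)⁻¹, i.e. σᴳ(τᴳ(g)) = τᴳ(σᴳ(g)) for all g ∈ SL(3,ℂ). -/

import Mathlib

open Complex Matrix

noncomputable section

abbrev M3 := Matrix (Fin 3) (Fin 3) ℂ

/-- ε = exp(iπ/3). -/
def eps : ℂ := Complex.exp (Real.pi * Complex.I / 3)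

/-- The matrix P with rows (0, ε², 0), (ε⁴, 0, 0), (0, 0, 1). -/
def Pm : M3 := !![0, eps ^ 2, 0; eps ^ 4, 0, 0; 0, 0, 1]

/-- σᴳ(g) = P (gᵀ)⁻¹ P. -/
def sigmaG (g : M3) : M3 := Pm * (gᵀ)⁻¹ * Pm

/-- τᴳ(g) = (conj(g)ᵀ)⁻¹. -/
def tauG (g : M3) : M3 := (gᴴ)⁻¹

/-- SL(3,ℂ). -/
def SL3 : Set M3 := {g : M3 | g.det = 1}

/-- SU(3). -/
def SU3 : Set M3 := {g : M3 | g * gᴴ = 1 ∧ g.det = 1}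

lemma eps6 : eps ^ 6 = 1 := by
  rw [eps, ← Complex.exp_nat_mul, Complex.exp_eq_one_iff]
  exact ⟨1, by push_cast; ring⟩

lemma eps_ne : eps ≠ 0 := Complex.exp_ne_zero _

lemma eps_pow_ne {k : ℕ} (h6 : ¬ (6 ∣ k)) : eps ^ k ≠ 1 := by
  rw [eps, ← Complex.exp_nat_mul]
  intro h
  rw [Complex.exp_eq_one_iff] at h
  obtain ⟨n, hn⟩ := h
  have hπ : (Real.pi : ℂ) ≠ 0 := by exact_mod_cast Real.pi_ne_zero
  have hI : (Complex.I : ℂ) ≠ 0 := Complex.I_ne_zero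
  have h : (k:ℂ) = n * 6 := by
    field_simp at hn
    linear_combination hn
  have h2 : (k:ℤ) = n * 6 := by exact_mod_cast h
  exact h6 ⟨n.toNat, by omega⟩

lemma eps_mul_conj : eps * (starRingEnd ℂ) eps = 1 := by
  rw [eps, ← Complex.exp_conj, ← Complex.exp_add]
  have : (starRingEnd ℂ) (↑Real.pi * Complex.I / 3) = -(↑Real.pi * Complex.I / 3) := by
    rw [map_div₀, _root_.map_mul, Complex.conj_I, Complex.conj_ofReal, map_ofNat]
    ring
  rw [this]
  simp

lemma conj_eps : (starRingEnd ℂ) eps = eps ^ 5 := by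
  apply mul_left_cancel₀ eps_ne
  rw [eps_mul_conj, ← pow_succ']
  exact eps6.symm

lemma Pm_sq : Pm * Pm = 1 := by
  rw [Pm, Matrix.mul_fin_three]
  have h1 : eps ^ 2 * eps ^ 4 = 1 := by rw [← pow_add]; exact eps6
  have h2 : eps ^ 4 * eps ^ 2 = 1 := by rw [← pow_add]; exact eps6
  simp [h1, h2, Matrix.one_fin_three]

lemma Pm_inv : Pm⁻¹ = Pm := Matrix.inv_eq_right_inv Pm_sq

lemma Pm_det : Pm.det = -1 := by
  rw [Pm, Matrix.det_fin_three]
  simp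
  rw [← pow_add]
  norm_num [eps6]

lemma Pm_conjT : Pmᴴ = Pm := by
  have c2 : (starRingEnd ℂ) (eps ^ 2) = eps ^ 4 := by
    rw [map_pow, conj_eps, ← pow_mul]
    calc eps ^ 10 = eps ^ 6 * eps ^ 4 := by ring
    _ = eps ^ 4 := by rw [eps6, one_mul]
  have c4 : (starRingEnd ℂ) (eps ^ 4) = eps ^ 2 := by
    rw [map_pow, conj_eps, ← pow_mul]
    calc eps ^ 20 = (eps ^ 6) ^ 3 * eps ^ 2 := by ring
    _ = eps ^ 2 := by rw [eps6]; ring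
  rw [Pm]
  ext i j
  fin_cases i <;> fin_cases j <;>
    simp [Matrix.conjTranspose_apply, Matrix.vecHead, Matrix.vecTail, ← map_pow, c2, c4]

lemma PmT : Pmᵀ = !![0, eps ^ 4, 0; eps ^ 2, 0, 0; 0, 0, 1] := by
  rw [Pm]; ext i j; fin_cases i <;> fin_cases j <;> simp [Matrix.vecHead, Matrix.vecTail]

lemma PmT_sq : Pmᵀ * Pmᵀ = 1 := by
  rw [← Matrix.transpose_mul, Pm_sq, Matrix.transpose_one]

lemma PmT_inv : (Pmᵀ)⁻¹ = Pmᵀ := Matrix.inv_eq_right_inv PmT_sq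

def Qm : M3 := Pm * Pmᵀ
def Qm' : M3 := Pmᵀ * Pm

lemma Qm_eq : Qm = !![eps ^ 4, 0, 0; 0, eps ^ 2, 0; 0, 0, 1] := by
  rw [Qm, PmT, Pm, Matrix.mul_fin_three]
  have h8 : eps ^ 4 * eps ^ 4 = eps ^ 2 := by linear_combination eps ^ 2 * eps6
  have h4 : eps ^ 2 * eps ^ 2 = eps ^ 4 := by ring
  simp [h8, h4]

lemma Qm'_eq : Qm' = !![eps ^ 2, 0, 0; 0, eps ^ 4, 0; 0, 0, 1] := by
  rw [Qm', PmT, Pm, Matrix.mul_fin_three]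
  have h8 : eps ^ 4 * eps ^ 4 = eps ^ 2 := by linear_combination eps ^ 2 * eps6
  have h4 : eps ^ 2 * eps ^ 2 = eps ^ 4 := by ring
  simp [h8, h4]

lemma Qm3 : Qm * Qm * Qm = 1 := by
  rw [Qm_eq, Matrix.mul_fin_three, Matrix.mul_fin_three]
  have h12 : eps ^ 4 * eps ^ 4 * eps ^ 4 = 1 := by linear_combination (eps ^ 6 + 1) * eps6
  have h6' : eps ^ 2 * eps ^ 2 * eps ^ 2 = 1 := by linear_combination eps6
  simp [h12, h6', Matrix.one_fin_three]

lemma Qm'3 : Qm' * Qm' * Qm' = 1 := by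
  rw [Qm'_eq, Matrix.mul_fin_three, Matrix.mul_fin_three]
  have h12 : eps ^ 4 * eps ^ 4 * eps ^ 4 = 1 := by linear_combination (eps ^ 6 + 1) * eps6
  have h6' : eps ^ 2 * eps ^ 2 * eps ^ 2 = 1 := by linear_combination eps6
  simp [h12, h6', Matrix.one_fin_three]

lemma key (A B : M3) : (Pm * A * Pm) * (Pm * B * Pm) = Pm * (A * B) * Pm := by
  have : (Pm * A * Pm) * (Pm * B * Pm) = Pm * A * (Pm * Pm) * B * Pm := by noncomm_ring
  rw [this, Pm_sq, mul_one]
  noncomm_ring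

lemma sigma_mul (g h : M3) : sigmaG (g * h) = sigmaG g * sigmaG h := by
  rw [sigmaG, sigmaG, sigmaG, key, Matrix.transpose_mul, Matrix.mul_inv_rev]

lemma sigma_sq (g : M3) (hu : IsUnit g.det) : sigmaG (sigmaG g) = Qm * g * Qm' := by
  have h1 : (sigmaG g)ᵀ = Pmᵀ * (g⁻¹ * Pmᵀ) := by
    rw [sigmaG, Matrix.transpose_mul, Matrix.transpose_mul, Matrix.transpose_nonsing_inv,
      Matrix.transpose_transpose]
  have h2 : ((sigmaG g)ᵀ)⁻¹ = Pmᵀ * g * Pmᵀ := by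
    rw [h1, Matrix.mul_inv_rev, Matrix.mul_inv_rev, PmT_inv,
      Matrix.nonsing_inv_nonsing_inv _ hu]
  rw [sigmaG, h2, Qm, Qm']
  noncomm_ring

lemma det_sigma (g : M3) (hg : g.det = 1) : (sigmaG g).det = 1 := by
  rw [sigmaG, Matrix.det_mul, Matrix.det_mul, Pm_det, Matrix.det_nonsing_inv,
    Matrix.det_transpose, hg]
  simp

lemma isUnit_of_SL (g : M3) (hg : g.det = 1) : IsUnit g.det := by rw [hg]; exact isUnit_one

lemma sigma6 (g : M3) (hg : g.det = 1) :
    sigmaG (sigmaG (sigmaG (sigmaG (sigmaG (sigmaG g))))) = g := by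
  have hu : IsUnit g.det := isUnit_of_SL g hg
  have e1 : sigmaG (sigmaG g) = Qm * g * Qm' := sigma_sq g hu
  have hd1 : (Qm * g * Qm').det = 1 := by
    rw [← e1, det_sigma _ (det_sigma _ hg)]
  have e2 : sigmaG (sigmaG (Qm * g * Qm')) = Qm * (Qm * g * Qm') * Qm' :=
    sigma_sq _ (isUnit_of_SL _ hd1)
  have hd2 : (Qm * (Qm * g * Qm') * Qm').det = 1 := by
    rw [← e2, det_sigma _ (det_sigma _ hd1)]
  have e3 : sigmaG (sigmaG (Qm * (Qm * g * Qm') * Qm')) =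
      Qm * (Qm * (Qm * g * Qm') * Qm') * Qm' := sigma_sq _ (isUnit_of_SL _ hd2)
  rw [e1, e2, e3]
  have : Qm * (Qm * (Qm * g * Qm') * Qm') * Qm' = (Qm * Qm * Qm) * g * (Qm' * Qm' * Qm') := by
    noncomm_ring
  rw [this, Qm3, Qm'3, one_mul, mul_one]

-- witnesses
def Dm : M3 := !![(2:ℂ), 0, 0; 0, 1, 0; 0, 0, (2:ℂ)⁻¹]
def Sm : M3 := !![(1:ℂ), 0, 0; 0, (2:ℂ)⁻¹, 0; 0, 0, 2]
def Em : M3 := !![(1:ℂ), 1, 0; 0, 1, 0; 0, 0, 1]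

lemma Dm_det : Dm.det = 1 := by rw [Dm, Matrix.det_fin_three]; simp
lemma Em_det : Em.det = 1 := by rw [Em, Matrix.det_fin_three]; simp
lemma Sm_det : Sm.det = 1 := by rw [Sm, Matrix.det_fin_three]; simp

lemma DmT : Dmᵀ = Dm := by
  rw [Dm]; ext i j; fin_cases i <;> fin_cases j <;> simp [Matrix.vecHead, Matrix.vecTail]

lemma Dm_inv : Dm⁻¹ = !![(2:ℂ)⁻¹, 0, 0; 0, 1, 0; 0, 0, 2] := by
  apply Matrix.inv_eq_right_inv
  rw [Dm, Matrix.mul_fin_three]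
  norm_num
  exact Matrix.one_fin_three.symm

lemma sigma_Dm : sigmaG Dm = Sm := by
  rw [sigmaG, DmT, Dm_inv]
  ext i j
  fin_cases i <;> fin_cases j <;>
    simp [Pm, Sm, Matrix.mul_apply, Fin.sum_univ_three, Matrix.vecHead, Matrix.vecTail] <;>
    first
      | rfl
      | linear_combination eps6
      | linear_combination (2:ℂ)⁻¹ * eps6
      | linear_combination 2 * eps6
      | norm_num <;> linear_combination (2:ℂ)⁻¹ * eps6

lemma sigma2_Sm : sigmaG (sigmaG Sm) = Sm := by
  rw [sigma_sq Sm (isUnit_of_SL _ Sm_det), Qm_eq, Qm'_eq]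
  ext i j
  fin_cases i <;> fin_cases j <;>
    simp [Sm, Matrix.mul_apply, Fin.sum_univ_three, Matrix.vecHead, Matrix.vecTail] <;>
    first
      | rfl
      | linear_combination eps6
      | linear_combination (2:ℂ)⁻¹ * eps6
      | linear_combination 2 * eps6
      | norm_num <;> linear_combination (2:ℂ)⁻¹ * eps6

lemma Sm_ne_Dm : Sm ≠ Dm := by
  intro h
  have := congrFun (congrFun h 0) 0
  rw [Sm, Dm] at this
  simp at this

def Fm : M3 := !![(1:ℂ), eps ^ 2, 0; 0, 1, 0; 0, 0, 1]
def Fm' : M3 := !![(1:ℂ), eps ^ 4, 0; 0, 1, 0; 0, 0, 1]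

lemma sigma2_Em : sigmaG (sigmaG Em) = Fm := by
  rw [sigma_sq Em (isUnit_of_SL _ Em_det), Qm_eq, Qm'_eq]
  ext i j
  fin_cases i <;> fin_cases j <;>
    simp [Em, Fm, Matrix.mul_apply, Fin.sum_univ_three, Matrix.vecHead, Matrix.vecTail] <;>
    first
      | rfl
      | linear_combination eps6
      | linear_combination eps ^ 2 * eps6

lemma Fm_det : Fm.det = 1 := by rw [Fm, Matrix.det_fin_three]; simp

lemma sigma2_Fm : sigmaG (sigmaG Fm) = Fm' := by
  rw [sigma_sq Fm (isUnit_of_SL _ Fm_det), Qm_eq, Qm'_eq]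
  ext i j
  fin_cases i <;> fin_cases j <;>
    simp [Fm, Fm', Matrix.mul_apply, Fin.sum_univ_three, Matrix.vecHead, Matrix.vecTail] <;>
    first
      | rfl
      | linear_combination eps6
      | linear_combination eps ^ 4 * eps6

lemma eps_ne_one : eps ≠ 1 := by
  have := eps_pow_ne (k := 1) (by norm_num); simpa using this

lemma eps_ne_neg_one : eps ≠ -1 := by
  intro h
  exact eps_pow_ne (k := 2) (by norm_num) (by rw [h]; ring)

lemma Fm_ne_Em : Fm ≠ Em := by
  intro h
  have := congrFun (congrFun h 0) 1
  rw [Fm, Em] at this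
  simp at this
  rcases this with h1 | h1
  · exact eps_ne_one h1
  · exact eps_ne_neg_one h1

lemma Fm'_ne_Em : Fm' ≠ Em := by
  intro h
  have := congrFun (congrFun h 0) 1
  rw [Fm', Em] at this
  simp only [Matrix.cons_val', Matrix.cons_val_zero, Matrix.cons_val_one, Matrix.head_cons,
    Matrix.empty_val', Matrix.cons_val_fin_one, Matrix.of_apply, Matrix.head_fin_const] at this
  exact eps_pow_ne (k := 4) (by norm_num) this

lemma ct_comm (g : M3) : (gᴴ)ᵀ = (gᵀ)ᴴ := by
  ext i j; simp [Matrix.conjTranspose_apply]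

lemma sigma_SU (g : M3) (h1 : g * gᴴ = 1) (h2 : g.det = 1) :
    sigmaG g * (sigmaG g)ᴴ = 1 ∧ (sigmaG g).det = 1 := by
  refine ⟨?_, det_sigma g h2⟩
  have hct : (sigmaG g)ᴴ = Pm * ((gᵀ)ᴴ)⁻¹ * Pm := by
    rw [sigmaG, Matrix.conjTranspose_mul, Matrix.conjTranspose_mul, Pm_conjT,
      Matrix.conjTranspose_nonsing_inv]
    noncomm_ring
  have htr : (gᵀ)ᴴ * gᵀ = 1 := by
    have := congrArg Matrix.transpose h1
    rw [Matrix.transpose_mul, Matrix.transpose_one, ct_comm] at this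
    exact this
  rw [hct, sigmaG, key, ← Matrix.mul_inv_rev, htr, inv_one, mul_one, Pm_sq]

lemma sigma_tau (g : M3) (hg : g.det = 1) : sigmaG (tauG g) = tauG (sigmaG g) := by
  have hu1 : IsUnit ((gᴴ)ᵀ).det := by
    rw [Matrix.det_transpose, Matrix.det_conjTranspose, hg]
    simp
  have hu2 : IsUnit ((gᵀ)ᴴ).det := by
    rw [← ct_comm]; exact hu1
  have hL : sigmaG (tauG g) = Pm * (gᴴ)ᵀ * Pm := by
    rw [sigmaG, tauG, Matrix.transpose_nonsing_inv, Matrix.nonsing_inv_nonsing_inv _ hu1]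
  have hR : tauG (sigmaG g) = Pm * (gᵀ)ᴴ * Pm := by
    rw [tauG, sigmaG, Matrix.conjTranspose_mul, Matrix.conjTranspose_mul, Pm_conjT,
      Matrix.conjTranspose_nonsing_inv, Matrix.mul_inv_rev, Matrix.mul_inv_rev, Pm_inv,
      Matrix.nonsing_inv_nonsing_inv _ hu2]
  rw [hL, hR, ct_comm]


/-- σᴳ is a group automorphism of SL(3,ℂ) of order exactly 6, it maps SU(3) onto SU(3)
and it commutes with τᴳ. -/
theorem statement1 :
    (∀ g h : M3, g ∈ SL3 → h ∈ SL3 → sigmaG (g * h) = sigmaG g * sigmaG h) ∧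
    Set.BijOn sigmaG SL3 SL3 ∧
    (∀ g ∈ SL3, sigmaG^[6] g = g) ∧
    (∀ j : ℕ, 1 ≤ j → j ≤ 5 → ∃ g ∈ SL3, sigmaG^[j] g ≠ g) ∧
    sigmaG '' SU3 = SU3 ∧
    (∀ g ∈ SL3, sigmaG (tauG g) = tauG (sigmaG g)) := by
  have mapsTo : ∀ g ∈ SL3, sigmaG g ∈ SL3 := fun g hg => det_sigma g hg
  refine ⟨fun g h _ _ => sigma_mul g h, ⟨mapsTo, ?_, ?_⟩, ?_, ?_, ?_, fun g hg => sigma_tau g hg⟩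
  · -- InjOn
    intro g hg h hh heq
    have e1 := sigma6 g hg
    have e2 := sigma6 h hh
    rw [heq] at e1
    exact e1.symm.trans e2
  · -- SurjOn
    intro g hg
    refine ⟨sigmaG (sigmaG (sigmaG (sigmaG (sigmaG g)))), ?_, sigma6 g hg⟩
    exact mapsTo _ (mapsTo _ (mapsTo _ (mapsTo _ (mapsTo _ hg))))
  · -- iterate 6
    intro g hg
    simp only [Function.iterate_succ, Function.iterate_zero, Function.comp_apply, id_eq]
    exact sigma6 g hg
  · -- order exactly 6
    intro j h1 h5
    interval_cases j
    · exact ⟨Dm, Dm_det, by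
        simp only [Function.iterate_one]
        rw [sigma_Dm]; exact Sm_ne_Dm⟩
    · exact ⟨Em, Em_det, by
        simp only [Function.iterate_succ, Function.iterate_zero, Function.comp_apply, id_eq]
        rw [sigma2_Em]; exact Fm_ne_Em⟩
    · exact ⟨Dm, Dm_det, by
        simp only [Function.iterate_succ, Function.iterate_zero, Function.comp_apply, id_eq]
        rw [sigma_Dm, sigma2_Sm]; exact Sm_ne_Dm⟩
    · exact ⟨Em, Em_det, by
        simp only [Function.iterate_succ, Function.iterate_zero, Function.comp_apply, id_eq]
        rw [sigma2_Em, sigma2_Fm]; exact Fm'_ne_Em⟩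
    · exact ⟨Dm, Dm_det, by
        simp only [Function.iterate_succ, Function.iterate_zero, Function.comp_apply, id_eq]
        rw [sigma_Dm, sigma2_Sm, sigma2_Sm]; exact Sm_ne_Dm⟩
  · -- SU3 image
    apply Set.Subset.antisymm
    · rintro x ⟨g, ⟨hg1, hg2⟩, rfl⟩
      exact sigma_SU g hg1 hg2
    · rintro g ⟨hg1, hg2⟩
      have s1 := sigma_SU g hg1 hg2
      have s2 := sigma_SU _ s1.1 s1.2
      have s3 := sigma_SU _ s2.1 s2.2
      have s4 := sigma_SU _ s3.1 s3.2
      have s5 := sigma_SU _ s4.1 s4.2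
      exact ⟨sigmaG (sigmaG (sigmaG (sigmaG (sigmaG g)))), ⟨s5.1, s5.2⟩, sigma6 g hg2⟩
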